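/- Suppose F is injective, Σ is an F-spanning set for Γ, and m > 0 is an integer. Then Σ^(m) := {[w]_F : w a word over Σ of length m} is an F^m-spanning set for Γ. -/

import Mathlib

open Pointwise

/-- `[w]_F`: the base-`F` evaluation of a word `w = x₀x₁⋯x_m`,
namely `x₀ + F x₁ + ⋯ + F^m x_m`, with `[∅]_F = 0`. -/
def wordVal {Γ : Type*} [AddCommGroup Γ] (F : AddMonoid.End Γ) : List Γ → Γ
  | [] => 0
  | x :: xs => x + F (wordVal F xs)

/-- `Sig` is an `F`-spanning set for `Γ`. -/
def IsSpanningSet {Γ : Type*} [AddCommGroup Γ] (F : AddMonoid.End Γ) (Sig : Set Γ) : Prop :=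
  Sig.Finite ∧
  (0 : Γ) ∈ Sig ∧ (∀ x ∈ Sig, -x ∈ Sig) ∧
  (∀ x : Γ, F x ∈ Sig → x ∈ Sig) ∧
  (∀ x : Γ, ∃ w : List Γ, (∀ y ∈ w, y ∈ Sig) ∧ wordVal F w = x) ∧
  (∀ x₁ ∈ Sig, ∀ x₂ ∈ Sig, ∀ x₃ ∈ Sig, ∀ x₄ ∈ Sig, ∀ x₅ ∈ Sig,
    ∃ t ∈ Sig, ∃ t' ∈ Sig, x₁ + x₂ + x₃ + x₄ + x₅ = t + F t') ∧
  (∀ x₁ ∈ Sig, ∀ x₂ ∈ Sig, ∀ x₃ ∈ Sig,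
    (∃ y : Γ, x₁ + x₂ + x₃ = F y) → ∃ t ∈ Sig, x₁ + x₂ + x₃ = F t)

/-- `Σ^(m)`: the set of base-`F` values of words of length `m` over `Σ`. -/
def sigmaPow {Γ : Type*} [AddCommGroup Γ] (F : AddMonoid.End Γ) (Sig : Set Γ)
    (m : ℕ) : Set Γ :=
  {x : Γ | ∃ w : List Γ, (∀ y ∈ w, y ∈ Sig) ∧ w.length = m ∧ wordVal F w = x}

section Aux

variable {Γ : Type*} [AddCommGroup Γ] {F : AddMonoid.End Γ} {Sig : Set Γ}

lemma wordVal_nil' (F : AddMonoid.End Γ) : wordVal F ([] : List Γ) = 0 := rfl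

lemma wordVal_cons' (F : AddMonoid.End Γ) (x : Γ) (xs : List Γ) :
    wordVal F (x :: xs) = x + F (wordVal F xs) := rfl

lemma wordVal_replicate_zero' (F : AddMonoid.End Γ) (k : ℕ) :
    wordVal F (List.replicate k (0:Γ)) = 0 := by
  induction k with
  | zero => rfl
  | succ k ih => rw [List.replicate_succ, wordVal_cons', ih, map_zero, add_zero]

lemma wordVal_append' (F : AddMonoid.End Γ) (u v : List Γ) :
    wordVal F (u ++ v) = wordVal F u + (F ^ u.length) (wordVal F v) := by
  induction u with
  | nil => simp [wordVal_nil']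
  | cons x xs ih =>
      rw [List.cons_append, wordVal_cons', wordVal_cons', ih, map_add, List.length_cons,
        pow_succ' F xs.length]
      simp [add_assoc]

lemma wordVal_map_neg' (F : AddMonoid.End Γ) (w : List Γ) :
    wordVal F (w.map Neg.neg) = - wordVal F w := by
  induction w with
  | nil => simp [wordVal_nil']
  | cons x xs ih =>
      rw [List.map_cons, wordVal_cons', wordVal_cons', ih, map_neg]
      abel

/-- Key digit-pulling lemma: if `F^(|w|) y = c + [w]_F` with `c` and the letters of `w`
in `Σ`, then `y ∈ Σ`. -/
lemma mem_of_pow_apply_eq (hF : Function.Injective ⇑F)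
    (h0 : (0:Γ) ∈ Sig)
    (h3 : ∀ x₁ ∈ Sig, ∀ x₂ ∈ Sig, ∀ x₃ ∈ Sig,
      (∃ y : Γ, x₁ + x₂ + x₃ = F y) → ∃ t ∈ Sig, x₁ + x₂ + x₃ = F t) :
    ∀ (w : List Γ), (∀ y ∈ w, y ∈ Sig) → ∀ c ∈ Sig, ∀ y : Γ,
      (F ^ w.length) y = c + wordVal F w → y ∈ Sig := by
  intro w
  induction w with
  | nil =>
      intro _ c hc y hy
      simp only [List.length_nil, pow_zero, AddMonoid.End.one_apply] at hy
      rw [hy]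
      simpa [wordVal] using hc
  | cons x w' ih =>
      intro hw c hc y hy
      have hx : x ∈ Sig := hw x (List.mem_cons_self)
      have hw' : ∀ y ∈ w', y ∈ Sig := fun y hy' => hw y (List.mem_cons_of_mem x hy')
      rw [List.length_cons, pow_succ' F w'.length] at hy
      rw [wordVal_cons'] at hy
      have hy' : F ((F ^ w'.length) y) = c + x + F (wordVal F w') := by
        have : (F * F ^ w'.length) y = F ((F ^ w'.length) y) := rfl
        rw [this] at hy
        rw [hy]; abel
      have hFim : ∃ z : Γ, c + x + 0 = F z := by
        refine ⟨(F ^ w'.length) y - wordVal F w', ?_⟩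
        rw [map_sub, hy']
        abel
      obtain ⟨t, ht, hts⟩ := h3 c hc x hx 0 h0 hFim
      have : F ((F ^ w'.length) y) = F (t + wordVal F w') := by
        rw [map_add, hy', ← hts]
        abel
      have heq : (F ^ w'.length) y = t + wordVal F w' := hF this
      exact ih hw' t ht y heq

/-- Sum of three words of length `n` plus two carries equals a word of
length `n` plus `F^n` of a sum of two letters. -/
lemma three_words_add
    (h5 : ∀ x₁ ∈ Sig, ∀ x₂ ∈ Sig, ∀ x₃ ∈ Sig, ∀ x₄ ∈ Sig, ∀ x₅ ∈ Sig,
      ∃ t ∈ Sig, ∃ t' ∈ Sig, x₁ + x₂ + x₃ + x₄ + x₅ = t + F t')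
    (h0 : (0:Γ) ∈ Sig) :
    ∀ (n : ℕ) (w₁ w₂ w₃ : List Γ),
      (∀ y ∈ w₁, y ∈ Sig) → (∀ y ∈ w₂, y ∈ Sig) → (∀ y ∈ w₃, y ∈ Sig) →
      w₁.length = n → w₂.length = n → w₃.length = n →
      ∀ c₁ ∈ Sig, ∀ c₂ ∈ Sig,
      ∃ u : List Γ, (∀ y ∈ u, y ∈ Sig) ∧ u.length = n ∧
        ∃ d₁ ∈ Sig, ∃ d₂ ∈ Sig,
          wordVal F w₁ + wordVal F w₂ + wordVal F w₃ + c₁ + c₂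
            = wordVal F u + (F ^ n) (d₁ + d₂) := by
  intro n
  induction n with
  | zero =>
      intro w₁ w₂ w₃ _ _ _ hl₁ hl₂ hl₃ c₁ hc₁ c₂ hc₂
      rw [List.length_eq_zero_iff] at hl₁ hl₂ hl₃
      subst hl₁; subst hl₂; subst hl₃
      exact ⟨[], by simp, rfl, c₁, hc₁, c₂, hc₂, by simp [wordVal]⟩
  | succ n ih =>
      intro w₁ w₂ w₃ hm₁ hm₂ hm₃ hl₁ hl₂ hl₃ c₁ hc₁ c₂ hc₂
      obtain ⟨a, w₁', rfl⟩ := List.exists_of_length_succ w₁ hl₁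
      obtain ⟨b, w₂', rfl⟩ := List.exists_of_length_succ w₂ hl₂
      obtain ⟨e, w₃', rfl⟩ := List.exists_of_length_succ w₃ hl₃
      simp only [List.length_cons, Nat.succ.injEq] at hl₁ hl₂ hl₃
      have ha : a ∈ Sig := hm₁ a (List.mem_cons_self)
      have hb : b ∈ Sig := hm₂ b (List.mem_cons_self)
      have he : e ∈ Sig := hm₃ e (List.mem_cons_self)
      obtain ⟨t, ht, t', ht', hsum⟩ := h5 a ha b hb e he c₁ hc₁ c₂ hc₂
      obtain ⟨u', hu'mem, hu'len, d₁, hd₁, d₂, hd₂, hval⟩ :=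
        ih w₁' w₂' w₃' (fun y hy => hm₁ y (List.mem_cons_of_mem _ hy))
          (fun y hy => hm₂ y (List.mem_cons_of_mem _ hy))
          (fun y hy => hm₃ y (List.mem_cons_of_mem _ hy))
          hl₁ hl₂ hl₃ t' ht' 0 h0
      refine ⟨t :: u', ?_, by simp [hu'len], d₁, hd₁, d₂, hd₂, ?_⟩
      · intro y hy
        rcases List.mem_cons.1 hy with rfl | hy
        · exact ht
        · exact hu'mem y hy
      · rw [wordVal_cons', wordVal_cons', wordVal_cons', wordVal_cons']
        have hpow : ∀ z : Γ, (F ^ (n+1)) z = F ((F ^ n) z) := by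
          intro z; rw [pow_succ']; rfl
        rw [hpow]
        calc a + F (wordVal F w₁') + (b + F (wordVal F w₂')) + (e + F (wordVal F w₃')) + c₁ + c₂
            = (a + b + e + c₁ + c₂) + F (wordVal F w₁' + wordVal F w₂' + wordVal F w₃') := by
              rw [map_add, map_add]; abel
          _ = (t + F t') + F (wordVal F w₁' + wordVal F w₂' + wordVal F w₃') := by rw [hsum]
          _ = t + F (wordVal F w₁' + wordVal F w₂' + wordVal F w₃' + t' + 0) := by
              simp only [map_add, map_zero]; abel
          _ = t + F (wordVal F u' + (F ^ n) (d₁ + d₂)) := by rw [hval]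
          _ = t + F (wordVal F u') + F ((F ^ n) (d₁ + d₂)) := by
              rw [map_add]; abel

/-- `Σ^(k)` is finite when `Σ` is. -/
lemma sigmaPow_finite' (hfin : Sig.Finite) : ∀ k : ℕ, (sigmaPow F Sig k).Finite
  | 0 => by
      apply (Set.finite_singleton (0:Γ)).subset
      rintro x ⟨w, _, hlen, rfl⟩
      rw [List.length_eq_zero_iff] at hlen
      subst hlen
      simp [wordVal]
  | (k+1) => by
      have IH := sigmaPow_finite' hfin k
      apply ((hfin.prod IH).image (fun p : Γ × Γ => p.1 + F p.2)).subset
      rintro x ⟨w, hw, hlen, rfl⟩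
      obtain ⟨a, w', rfl⟩ := List.exists_of_length_succ w hlen
      simp only [List.length_cons, Nat.succ.injEq] at hlen
      exact ⟨(a, wordVal F w'),
        Set.mem_prod.2 ⟨hw a (List.mem_cons_self),
          ⟨w', fun y hy => hw y (List.mem_cons_of_mem _ hy), hlen, rfl⟩⟩, rfl⟩

/-- chopping a word of length `m * k` into `k` blocks of length `m`. -/
lemma chop_word (m : ℕ) :
    ∀ (k : ℕ) (w : List Γ), (∀ y ∈ w, y ∈ Sig) → w.length = m * k →
      ∃ W : List Γ, (∀ y ∈ W, y ∈ sigmaPow F Sig m) ∧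
        wordVal (F ^ m) W = wordVal F w := by
  intro k
  induction k with
  | zero =>
      intro w _ hlen
      rw [Nat.mul_zero, List.length_eq_zero_iff] at hlen
      subst hlen
      exact ⟨[], by simp, rfl⟩
  | succ k ih =>
      intro w hw hlen
      have hms : m * (k+1) = m * k + m := by ring
      have hmle : m ≤ w.length := by rw [hlen, hms]; omega
      have hlentake : (w.take m).length = m := by
        rw [List.length_take]; omega
      have hlendrop : (w.drop m).length = m * k := by
        rw [List.length_drop, hlen, hms]; omega
      obtain ⟨W', hW'mem, hW'val⟩ := ih (w.drop m)
        (fun y hy => hw y (List.mem_of_mem_drop hy)) hlendrop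
      refine ⟨wordVal F (w.take m) :: W', ?_, ?_⟩
      · intro y hy
        rcases List.mem_cons.1 hy with rfl | hy
        · exact ⟨w.take m, fun z hz => hw z (List.mem_of_mem_take hz), hlentake, rfl⟩
        · exact hW'mem y hy
      · rw [wordVal_cons', hW'val]
        conv_rhs => rw [← List.take_append_drop m w]
        rw [wordVal_append', hlentake]

end Aux

/-- If `F` is injective, `Σ` is an `F`-spanning set for `Γ`, and
`m > 0`, then `Σ^(m)` is an `F^m`-spanning set for `Γ`. -/
theorem sigmaPow_isSpanningSet_pow {Γ : Type*} [AddCommGroup Γ] (F : AddMonoid.End Γ)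
    (hF : Function.Injective ⇑F) (Sig : Set Γ) (hSig : IsSpanningSet F Sig)
    (m : ℕ) (hm : 0 < m) :
    IsSpanningSet (F ^ m) (sigmaPow F Sig m) := by
  -- First dispose of the case `m = 1`, where `Σ^(1) = Σ`.
  rcases eq_or_ne m 1 with rfl | hne
  · have hSP : sigmaPow F Sig 1 = Sig := by
      ext x
      constructor
      · rintro ⟨w, hw, hlen, rfl⟩
        obtain ⟨a, w', rfl⟩ := List.exists_of_length_succ w hlen
        simp only [List.length_cons, Nat.succ.injEq, List.length_eq_zero_iff] at hlen
        subst hlen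
        have : wordVal F [a] = a := by
          rw [wordVal_cons', wordVal_nil', map_zero, add_zero]
        rw [this]
        exact hw a (List.mem_cons_self)
      · intro hx
        refine ⟨[x], ?_, rfl, by rw [wordVal_cons', wordVal_nil', map_zero, add_zero]⟩
        intro y hy
        rw [List.mem_singleton] at hy
        subst hy; exact hx
    rw [hSP, pow_one]
    exact hSig
  have hm2 : 2 ≤ m := by omega
  obtain ⟨hfin, h0, hneg, hpull, hspan, h5, h3⟩ := hSig
  -- Any element of `Σ` lies in `Σ^(m)`.
  have hmem1 : ∀ x ∈ Sig, x ∈ sigmaPow F Sig m := by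
    intro x hx
    refine ⟨x :: List.replicate (m-1) 0, ?_, ?_, ?_⟩
    · intro y hy
      rcases List.mem_cons.1 hy with rfl | hy
      · exact hx
      · rw [List.eq_of_mem_replicate hy]; exact h0
    · simp only [List.length_cons, List.length_replicate]; omega
    · rw [wordVal_cons', wordVal_replicate_zero', map_zero, add_zero]
  -- For `m ≥ 2`, any `s + F s'` with `s, s' ∈ Σ` lies in `Σ^(m)`.
  have hmem2 : ∀ s ∈ Sig, ∀ s' ∈ Sig, s + F s' ∈ sigmaPow F Sig m := by
    intro s hs s' hs'
    refine ⟨s :: s' :: List.replicate (m-2) 0, ?_, ?_, ?_⟩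
    · intro y hy
      rcases List.mem_cons.1 hy with rfl | hy
      · exact hs
      rcases List.mem_cons.1 hy with rfl | hy
      · exact hs'
      · rw [List.eq_of_mem_replicate hy]; exact h0
    · simp only [List.length_cons, List.length_replicate]; omega
    · rw [wordVal_cons', wordVal_cons', wordVal_replicate_zero', map_zero, add_zero]
  refine ⟨sigmaPow_finite' hfin m, ?_, ?_, ?_, ?_, ?_, ?_⟩
  -- `0 ∈ Σ^(m)`
  · exact ⟨List.replicate m 0,
      fun y hy => by rw [List.eq_of_mem_replicate hy]; exact h0,
      List.length_replicate, wordVal_replicate_zero' F m⟩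
  -- closed under negation
  · rintro x ⟨w, hw, hlen, rfl⟩
    refine ⟨w.map Neg.neg, ?_, by simp [hlen], wordVal_map_neg' F w⟩
    intro y hy
    obtain ⟨z, hz, rfl⟩ := List.mem_map.1 hy
    exact hneg z (hw z hz)
  -- `F^m x ∈ Σ^(m) → x ∈ Σ^(m)`
  · rintro x ⟨w, hw, hlen, hval⟩
    refine hmem1 x (mem_of_pow_apply_eq hF h0 h3 w hw 0 h0 x ?_)
    rw [hlen, hval, zero_add]
  -- every element is the value of a word over `Σ^(m)`
  · intro x
    obtain ⟨w, hw, hval⟩ := hspan x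
    set w' : List Γ := w ++ List.replicate (m * w.length - w.length) 0 with hw'def
    have hw'mem : ∀ y ∈ w', y ∈ Sig := by
      intro y hy
      rcases List.mem_append.1 hy with hy | hy
      · exact hw y hy
      · rw [List.eq_of_mem_replicate hy]; exact h0
    have hwle : w.length ≤ m * w.length := Nat.le_mul_of_pos_left w.length hm
    have hw'len : w'.length = m * w.length := by
      rw [hw'def, List.length_append, List.length_replicate]; omega
    have hw'val : wordVal F w' = x := by
      rw [hw'def, wordVal_append', wordVal_replicate_zero', map_zero, add_zero, hval]
    obtain ⟨W, hWmem, hWval⟩ := chop_word m w.length w' hw'mem hw'len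
    exact ⟨W, hWmem, by rw [hWval, hw'val]⟩
  -- the five-sum condition
  · rintro x₁ ⟨w₁, hw₁, hl₁, rfl⟩ x₂ ⟨w₂, hw₂, hl₂, rfl⟩ x₃ ⟨w₃, hw₃, hl₃, rfl⟩
      x₄ ⟨w₄, hw₄, hl₄, rfl⟩ x₅ ⟨w₅, hw₅, hl₅, rfl⟩
    obtain ⟨u₁, hu₁mem, hu₁len, d₁, hd₁, d₂, hd₂, hval₁⟩ :=
      three_words_add h5 h0 m w₁ w₂ w₃ hw₁ hw₂ hw₃ hl₁ hl₂ hl₃ 0 h0 0 h0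
    obtain ⟨u₂, hu₂mem, hu₂len, e₁, he₁, e₂, he₂, hval₂⟩ :=
      three_words_add h5 h0 m u₁ w₄ w₅ hu₁mem hw₄ hw₅ hu₁len hl₄ hl₅ 0 h0 0 h0
    obtain ⟨s, hs, s', hs', hsum⟩ := h5 d₁ hd₁ d₂ hd₂ e₁ he₁ e₂ he₂ 0 h0
    refine ⟨wordVal F u₂, ⟨u₂, hu₂mem, hu₂len, rfl⟩, s + F s', hmem2 s hs s' hs', ?_⟩
    have h1 : wordVal F w₁ + wordVal F w₂ + wordVal F w₃
        = wordVal F u₁ + (F ^ m) (d₁ + d₂) := by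
      have := hval₁; rw [add_zero, add_zero] at this; exact this
    have h2 : wordVal F u₁ + wordVal F w₄ + wordVal F w₅
        = wordVal F u₂ + (F ^ m) (e₁ + e₂) := by
      have := hval₂; rw [add_zero, add_zero] at this; exact this
    have h3' : d₁ + d₂ + (e₁ + e₂) = s + F s' := by
      rw [← hsum]; abel
    calc wordVal F w₁ + wordVal F w₂ + wordVal F w₃ + wordVal F w₄ + wordVal F w₅
        = (wordVal F u₁ + wordVal F w₄ + wordVal F w₅) + (F ^ m) (d₁ + d₂) := by
          rw [h1]; abel
      _ = wordVal F u₂ + (F ^ m) (e₁ + e₂) + (F ^ m) (d₁ + d₂) := by rw [h2]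
      _ = wordVal F u₂ + (F ^ m) (d₁ + d₂ + (e₁ + e₂)) := by
          rw [map_add (F ^ m) (d₁ + d₂) (e₁ + e₂)]; abel
      _ = wordVal F u₂ + (F ^ m) (s + F s') := by rw [h3']
  -- the three-sum condition
  · rintro x₁ ⟨w₁, hw₁, hl₁, rfl⟩ x₂ ⟨w₂, hw₂, hl₂, rfl⟩ x₃ ⟨w₃, hw₃, hl₃, rfl⟩ ⟨y, hy⟩
    obtain ⟨u, humem, hulen, d₁, hd₁, d₂, hd₂, hval⟩ :=
      three_words_add h5 h0 m w₁ w₂ w₃ hw₁ hw₂ hw₃ hl₁ hl₂ hl₃ 0 h0 0 h0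
    rw [add_zero, add_zero] at hval
    have hz : y - (d₁ + d₂) ∈ Sig := by
      apply mem_of_pow_apply_eq hF h0 h3 u humem 0 h0
      rw [hulen, zero_add, map_sub, ← hy, hval]
      abel
    obtain ⟨s, hs, s', hs', hsum⟩ := h5 (y - (d₁ + d₂)) hz d₁ hd₁ d₂ hd₂ 0 h0 0 h0
    have hys : y = s + F s' := by
      rw [← hsum]; abel
    exact ⟨s + F s', hmem2 s hs s' hs', by rw [hy, hys]⟩
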